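/- The set J(M₁,M₂) of pairs (λ,μ) ∈ [0,1]² for which there exist trivial observables T₁, T₂ making λM₁ + (1−λ)T₁ and μM₂ + (1−μ)T₂ jointly measurable is a convex subset of [0,1]². -/

import Mathlib

open scoped ComplexOrder
/-- A POVM with countable outcome set `J` on the Hilbert space `ℂ^n`,
represented by matrices: each effect is positive semidefinite and they sum to the identity. -/
def IsPOVM {n : ℕ} {J : Type} [Countable J] (M : J → Matrix (Fin n) (Fin n) ℂ) : Prop :=
  (∀ j, (M j).PosSemidef) ∧ ∑' j, M j = 1

/-- A probability distribution on a countable set. -/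
def IsProbDist {J : Type} [Countable J] (p : J → ℝ) : Prop :=
  (∀ j, 0 ≤ p j) ∧ ∑' j, p j = 1

/-- A trivial POVM: each effect is a scalar multiple of the identity,
given by a probability distribution. -/
def IsTrivialPOVM {n : ℕ} {J : Type} [Countable J] (T : J → Matrix (Fin n) (Fin n) ℂ) : Prop :=
  ∃ p : J → ℝ, IsProbDist p ∧ ∀ j, T j = ((p j : ℝ) : ℂ) • 1

/-- Joint measurability: existence of a joint POVM with the two given POVMs as marginals. -/
def JointlyMeasurable {n : ℕ} {J K : Type} [Countable J] [Countable K]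
    (M₁ : J → Matrix (Fin n) (Fin n) ℂ) (M₂ : K → Matrix (Fin n) (Fin n) ℂ) : Prop :=
  ∃ G : J × K → Matrix (Fin n) (Fin n) ℂ, IsPOVM G ∧
    (∀ j, ∑' k, G (j, k) = M₁ j) ∧ (∀ k, ∑' j, G (j, k) = M₂ k)

/-- The mixture `l • M + (1 - l) • T`, effectwise. -/
def mix {n : ℕ} {J : Type} [Countable J] (l : ℝ)
    (M T : J → Matrix (Fin n) (Fin n) ℂ) : J → Matrix (Fin n) (Fin n) ℂ :=
  fun j => ((l : ℝ) : ℂ) • M j + (((1 - l : ℝ)) : ℂ) • T j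

/-- The joint measurability region `J(M₁,M₂)`: the set of `(λ,μ) ∈ [0,1]²` for which
some trivial observables `T₁, T₂` make `λM₁+(1−λ)T₁` and `μM₂+(1−μ)T₂` jointly measurable. -/
def JRegion {n : ℕ} {J K : Type} [Countable J] [Countable K]
    (M₁ : J → Matrix (Fin n) (Fin n) ℂ) (M₂ : K → Matrix (Fin n) (Fin n) ℂ) :
    Set (ℝ × ℝ) :=
  {x | x.1 ∈ Set.Icc (0 : ℝ) 1 ∧ x.2 ∈ Set.Icc (0 : ℝ) 1 ∧
    ∃ (T₁ : J → Matrix (Fin n) (Fin n) ℂ) (T₂ : K → Matrix (Fin n) (Fin n) ℂ),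
      IsTrivialPOVM T₁ ∧ IsTrivialPOVM T₂ ∧
        JointlyMeasurable (mix x.1 M₁ T₁) (mix x.2 M₂ T₂)}


open Matrix in
lemma psd_smul' {n : ℕ} {A : Matrix (Fin n) (Fin n) ℂ} (hA : A.PosSemidef) {c : ℝ}
    (hc : 0 ≤ c) : ((c : ℂ) • A).PosSemidef := by
  constructor
  · have : ((c : ℂ) • A)ᴴ = (c : ℂ) • A := by
      rw [conjTranspose_smul, hA.1.eq]
      congr 1
      simp [Complex.star_def, Complex.conj_ofReal]
    exact this
  · exact (hA.smul (by exact_mod_cast hc : (0 : ℂ) ≤ (c : ℂ))).2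

open Matrix in
lemma psd_add' {n : ℕ} {A B : Matrix (Fin n) (Fin n) ℂ} (hA : A.PosSemidef)
    (hB : B.PosSemidef) : (A + B).PosSemidef := by
  constructor
  · exact hA.1.add hB.1
  · exact (hA.add hB).2

lemma povm_summable {n : ℕ} {J : Type} [Countable J] {M : J → Matrix (Fin n) (Fin n) ℂ}
    (h : IsPOVM M) : Summable M := by
  rcases Nat.eq_zero_or_pos n with h0 | hpos
  · subst h0
    have hM0 : M = 0 := funext fun j => Subsingleton.elim _ _
    rw [hM0]; exact summable_zero
  · by_contra hs
    have h0 := tsum_eq_zero_of_not_summable hs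
    rw [h.2] at h0
    have h00 : (1 : Matrix (Fin n) (Fin n) ℂ) ⟨0, hpos⟩ ⟨0, hpos⟩
        = (0 : Matrix (Fin n) (Fin n) ℂ) ⟨0, hpos⟩ ⟨0, hpos⟩ := by rw [h0]
    simp [Matrix.one_apply_eq] at h00

lemma probdist_summable {J : Type} [Countable J] {p : J → ℝ} (h : IsProbDist p) :
    Summable p := by
  by_contra hs
  have := h.2
  rw [tsum_eq_zero_of_not_summable hs] at this
  norm_num at this

lemma mix_combo {n : ℕ} {J : Type} [Countable J] (M T S : J → Matrix (Fin n) (Fin n) ℂ)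
    (hT : IsTrivialPOVM T) (hS : IsTrivialPOVM S) (a b l₁ l₂ : ℝ)
    (ha : 0 ≤ a) (hb : 0 ≤ b) (hab : a + b = 1) (hl₁ : l₁ ≤ 1) (hl₂ : l₂ ≤ 1) :
    ∃ U : J → Matrix (Fin n) (Fin n) ℂ, IsTrivialPOVM U ∧
      ∀ j, (a : ℂ) • mix l₁ M T j + (b : ℂ) • mix l₂ M S j = mix (a * l₁ + b * l₂) M U j := by
  obtain ⟨p, ⟨hp0, hp1⟩, hTp⟩ := hT
  obtain ⟨q, ⟨hq0, hq1⟩, hSq⟩ := hS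
  have hc₁ : 0 ≤ a * (1 - l₁) := mul_nonneg ha (by linarith)
  have hc₂ : 0 ≤ b * (1 - l₂) := mul_nonneg hb (by linarith)
  have hcd : a * (1 - l₁) + b * (1 - l₂) = 1 - (a * l₁ + b * l₂) := by linear_combination hab
  by_cases hz : 1 - (a * l₁ + b * l₂) = 0
  · refine ⟨T, ⟨p, ⟨hp0, hp1⟩, hTp⟩, fun j => ?_⟩
    have hc₁0 : a * (1 - l₁) = 0 := by linarith
    have hc₂0 : b * (1 - l₂) = 0 := by linarith
    have key : (1 - (a * l₁ + b * l₂)) * p j = a * (1 - l₁) * p j + b * (1 - l₂) * q j := by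
      rw [hz, hc₁0, hc₂0]; ring
    have keyC : ((1 : ℂ) - ((a : ℂ) * l₁ + (b : ℂ) * l₂)) * (p j : ℂ)
        = (a : ℂ) * (1 - (l₁ : ℂ)) * (p j : ℂ) + (b : ℂ) * (1 - (l₂ : ℂ)) * (q j : ℂ) := by
      exact_mod_cast key
    simp only [mix, hTp, hSq]
    match_scalars
    · push_cast; ring
    · push_cast at keyC ⊢; linear_combination -keyC
  · have hps : Summable p := probdist_summable ⟨hp0, hp1⟩
    have hqs : Summable q := probdist_summable ⟨hq0, hq1⟩
    have hd0 : 0 < 1 - (a * l₁ + b * l₂) :=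
      lt_of_le_of_ne (by linarith) (Ne.symm hz)
    refine ⟨fun j => (((a * (1 - l₁) * p j + b * (1 - l₂) * q j) / (1 - (a * l₁ + b * l₂)) : ℝ) : ℂ) • 1,
      ⟨fun j => (a * (1 - l₁) * p j + b * (1 - l₂) * q j) / (1 - (a * l₁ + b * l₂)),
        ⟨fun j => div_nonneg (add_nonneg (mul_nonneg hc₁ (hp0 j)) (mul_nonneg hc₂ (hq0 j))) hd0.le,
          ?_⟩, fun j => rfl⟩, fun j => ?_⟩
    · rw [tsum_div_const, Summable.tsum_add (hps.mul_left _) (hqs.mul_left _), tsum_mul_left,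
        tsum_mul_left, hp1, hq1, mul_one, mul_one, hcd, div_self hz]
    · have key : (1 - (a * l₁ + b * l₂)) * ((a * (1 - l₁) * p j + b * (1 - l₂) * q j) / (1 - (a * l₁ + b * l₂)))
          = a * (1 - l₁) * p j + b * (1 - l₂) * q j := by
        rw [mul_comm, div_mul_cancel₀ _ hz]
      have keyC : ((1 : ℂ) - ((a : ℂ) * l₁ + (b : ℂ) * l₂)) *
          (((a * (1 - l₁) * p j + b * (1 - l₂) * q j) / (1 - (a * l₁ + b * l₂)) : ℝ) : ℂ)
          = (a : ℂ) * (1 - (l₁ : ℂ)) * (p j : ℂ) + (b : ℂ) * (1 - (l₂ : ℂ)) * (q j : ℂ) := by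
        exact_mod_cast key
      simp only [mix, hTp, hSq]
      match_scalars
      · push_cast; ring
      · push_cast at keyC ⊢; linear_combination -keyC

/-- The joint measurability region `J(M₁,M₂)` is convex. -/
theorem jRegion_convex {n : ℕ} {J K : Type} [Countable J] [Countable K]
    (M₁ : J → Matrix (Fin n) (Fin n) ℂ) (M₂ : K → Matrix (Fin n) (Fin n) ℂ)
    (hM₁ : IsPOVM M₁) (hM₂ : IsPOVM M₂) :
    Convex ℝ (JRegion M₁ M₂) := by
  intro x hx y hy a b ha hb hab
  obtain ⟨hx1, hx2, T₁, T₂, hT₁, hT₂, Gx, hGx, hGx1, hGx2⟩ := hx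
  obtain ⟨hy1, hy2, S₁, S₂, hS₁, hS₂, Gy, hGy, hGy1, hGy2⟩ := hy
  obtain ⟨U₁, hU₁, hU₁eq⟩ := mix_combo M₁ T₁ S₁ hT₁ hS₁ a b x.1 y.1 ha hb hab hx1.2 hy1.2
  obtain ⟨U₂, hU₂, hU₂eq⟩ := mix_combo M₂ T₂ S₂ hT₂ hS₂ a b x.2 y.2 ha hb hab hx2.2 hy2.2
  have hGxs := povm_summable hGx
  have hGys := povm_summable hGy
  simp only [JRegion, Set.mem_setOf_eq, Prod.fst_add, Prod.smul_fst, smul_eq_mul,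
    Prod.snd_add, Prod.smul_snd] at *
  refine ⟨⟨add_nonneg (mul_nonneg ha hx1.1) (mul_nonneg hb hy1.1), by nlinarith [hx1.2, hy1.2]⟩,
    ⟨add_nonneg (mul_nonneg ha hx2.1) (mul_nonneg hb hy2.1), by nlinarith [hx2.2, hy2.2]⟩,
    U₁, U₂, hU₁, hU₂, fun jk => (a : ℂ) • Gx jk + (b : ℂ) • Gy jk, ⟨?_, ?_⟩, ?_, ?_⟩
  · exact fun jk => psd_add' (psd_smul' (hGx.1 jk) ha) (psd_smul' (hGy.1 jk) hb)
  · rw [Summable.tsum_add (hGxs.const_smul _) (hGys.const_smul _), Summable.tsum_const_smul _ hGxs,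
      Summable.tsum_const_smul _ hGys, hGx.2, hGy.2, ← add_smul]
    have hab' : (a : ℂ) + (b : ℂ) = 1 := by exact_mod_cast hab
    rw [hab', one_smul]
  · intro j
    rw [Summable.tsum_add ((hGxs.prod_factor j).const_smul _) ((hGys.prod_factor j).const_smul _),
      Summable.tsum_const_smul _ (hGxs.prod_factor j), Summable.tsum_const_smul _ (hGys.prod_factor j),
      hGx1 j, hGy1 j]
    exact hU₁eq j
  · intro k
    have h1 : Summable fun j => Gx (j, k) := hGxs.prod_symm.prod_factor k
    have h2 : Summable fun j => Gy (j, k) := hGys.prod_symm.prod_factor k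
    rw [Summable.tsum_add (h1.const_smul _) (h2.const_smul _),
      Summable.tsum_const_smul _ h1, Summable.tsum_const_smul _ h2, hGx2 k, hGy2 k]
    exact hU₂eq k
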